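/- arXiv:1808.02530 — 2 statements merged into one kernel-verified Lean document; each statement's English description precedes it below -/
import Mathlib

section
/- (Explicit sketch matrices for a single sum constraint.) Let n ≥ 2, let L_1, …, L_n > 0, L = Σ_{i=1}^n L_i, M = diag(L_1, …, L_n), A = e^T ∈ ℝ^{1×n} (e the all-ones vector), and for each pair i < j let S_{(i,j)} = [e_i e_j] ∈ ℝ^{n×2} (e_i the i-th standard basis vector) with probability P_{(i,j)} = (L_i + L_j)/((n−1) L). Then: (i) Z_{S_{(i,j)}} = (1/(L_i + L_j)) (e_i − e_j)(e_i − e_j)^T; (ii) the expectation Z = Σ_{i<j} P_{(i,j)} Z_{S_{(i,j)}} equals (n/((n−1) L)) (I_n − (1/n) e e^T); and (iii) Z† = ((n−1) L/n) (I_n − (1/n) e e^T). In particular Z is positive definite on ker(A) = {u : e^T u = 0}. -/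
open Matrix

-- The Moore–Penrose pseudoinverse of a real matrix, defined via the four
-- Penrose conditions (which have a unique solution for every real matrix).
open Classical in
noncomputable def mpinv {k l : Type*} [Fintype k] [Fintype l] (B : Matrix k l ℝ) :
    Matrix l k ℝ :=
  if h : ∃ X : Matrix l k ℝ,
      B * X * B = B ∧ X * B * X = X ∧ (B * X)ᵀ = B * X ∧ (X * B)ᵀ = X * B
  then h.choose else 0

lemma mpinv_eq {k l : Type*} [Fintype k] [Fintype l] (B : Matrix k l ℝ) (X : Matrix l k ℝ)
    (h1 : B * X * B = B) (h2 : X * B * X = X) (h3 : (B * X)ᵀ = B * X) (h4 : (X * B)ᵀ = X * B) :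
    mpinv B = X := by
  have hex : ∃ X : Matrix l k ℝ,
      B * X * B = B ∧ X * B * X = X ∧ (B * X)ᵀ = B * X ∧ (X * B)ᵀ = X * B :=
    ⟨X, h1, h2, h3, h4⟩
  rw [mpinv, dif_pos hex]
  obtain ⟨g1, g2, g3, g4⟩ := hex.choose_spec
  set Y := hex.choose with hY
  have k1 : B * Y * (B * X) = B * X := by
    calc B * Y * (B * X) = B * Y * B * X := by simp [Matrix.mul_assoc]
    _ = B * X := by rw [g1]
  have k2 : B * X * (B * Y) = B * Y := by
    calc B * X * (B * Y) = B * X * B * Y := by simp [Matrix.mul_assoc]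
    _ = B * Y := by rw [h1]
  have hBXY : B * X = B * Y := by
    calc B * X = B * Y * (B * X) := k1.symm
    _ = (B * Y)ᵀ * (B * X)ᵀ := by rw [g3, h3]
    _ = (B * X * (B * Y))ᵀ := (Matrix.transpose_mul _ _).symm
    _ = (B * Y)ᵀ := by rw [k2]
    _ = B * Y := g3
  have k1' : X * B * (Y * B) = X * B := by
    calc X * B * (Y * B) = X * (B * Y * B) := by simp [Matrix.mul_assoc]
    _ = X * B := by rw [g1]
  have k2' : Y * B * (X * B) = Y * B := by
    calc Y * B * (X * B) = Y * (B * X * B) := by simp [Matrix.mul_assoc]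
    _ = Y * B := by rw [h1]
  have hXBY : X * B = Y * B := by
    calc X * B = X * B * (Y * B) := k1'.symm
    _ = (X * B)ᵀ * (Y * B)ᵀ := by rw [h4, g4]
    _ = (Y * B * (X * B))ᵀ := (Matrix.transpose_mul _ _).symm
    _ = (Y * B)ᵀ := by rw [k2']
    _ = Y * B := g4
  calc Y = Y * B * Y := g2.symm
  _ = Y * (B * Y) := by rw [Matrix.mul_assoc]
  _ = Y * (B * X) := by rw [hBXY]
  _ = X * B * X := by rw [← Matrix.mul_assoc, ← hXBY]
  _ = X := h2

lemma mpinv_smul_proj {k : Type*} [Fintype k] (Q : Matrix k k ℝ) (hQ : Qᵀ = Q)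
    (hQ2 : Q * Q = Q) (c : ℝ) (hc : c ≠ 0) : mpinv (c • Q) = c⁻¹ • Q := by
  apply mpinv_eq <;>
    simp only [Matrix.smul_mul, Matrix.mul_smul, smul_smul, Matrix.transpose_smul,
      Matrix.transpose_mul, hQ, hQ2]
  all_goals first
    | rfl
    | (congr 1; field_simp; try ring)

/-- `P_S = I - (AS)†(AS)`, the orthogonal projection onto `ker(AS)`. -/
noncomputable def Pmat {m n p : ℕ} (A : Matrix (Fin m) (Fin n) ℝ)
    (S : Matrix (Fin n) (Fin p) ℝ) : Matrix (Fin p) (Fin p) ℝ :=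
  1 - mpinv (A * S) * (A * S)

/-- `Z_S = S P_S (P_Sᵀ Sᵀ M S P_S)† P_Sᵀ Sᵀ`. -/
noncomputable def Zmat {m n p : ℕ} (A : Matrix (Fin m) (Fin n) ℝ)
    (M : Matrix (Fin n) (Fin n) ℝ) (S : Matrix (Fin n) (Fin p) ℝ) :
    Matrix (Fin n) (Fin n) ℝ :=
  S * Pmat A S * mpinv ((Pmat A S)ᵀ * Sᵀ * M * S * Pmat A S) * (Pmat A S)ᵀ * Sᵀ

/-- The gradient of `f : ℝ^n → ℝ`, as a vector of partial derivatives. -/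
noncomputable def gradv {n : ℕ} (f : (Fin n → ℝ) → ℝ) (x : Fin n → ℝ) : Fin n → ℝ :=
  fun i => fderiv ℝ f x (Pi.single i 1)

lemma part1 {n : ℕ} (L : Fin n → ℝ) (hL : ∀ i, 0 < L i) (i j : Fin n) (hij : i ≠ j)
    (S : Matrix (Fin n) (Fin 2) ℝ)
    (hS : S = Matrix.of fun k l =>
      if l = (0 : Fin 2) then (if k = i then (1 : ℝ) else 0)
      else (if k = j then (1 : ℝ) else 0)) :
    Zmat (Matrix.of fun (_ : Fin 1) (_ : Fin n) => (1 : ℝ)) (Matrix.diagonal L) S = (1 / (L i + L j)) •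
      Matrix.vecMulVec (Pi.single i 1 - Pi.single j 1) (Pi.single i 1 - Pi.single j 1) := by
  set A : Matrix (Fin 1) (Fin n) ℝ := Matrix.of fun _ _ => (1 : ℝ) with hA
  have hAS : A * S = Matrix.of fun _ _ => (1 : ℝ) := by
    ext a b
    rcases Fin.exists_fin_two.mp ⟨b, rfl⟩ with hb | hb <;>
      simp [Matrix.mul_apply, hA, hS, hb, Finset.sum_ite_eq']
  have hmpAS : mpinv (A * S) = Matrix.of fun (_ : Fin 2) (_ : Fin 1) => (1/2 : ℝ) := by
    rw [hAS]
    apply mpinv_eq <;>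
    · ext a b
      simp [Matrix.mul_apply, Fin.sum_univ_two, Fin.sum_univ_one]
      try norm_num
  set Pc : Matrix (Fin 2) (Fin 2) ℝ :=
    Matrix.of fun a b => if a = b then 1/2 else -(1/2) with hPc
  have hP : Pmat A S = Pc := by
    rw [Pmat, hmpAS, hAS]
    ext a b
    fin_cases a <;> fin_cases b <;>
      simp [Matrix.mul_apply, Fin.sum_univ_one, Matrix.one_apply, hPc] <;> norm_num
  have hPcT : Pcᵀ = Pc := by
    ext a b; fin_cases a <;> fin_cases b <;> simp [hPc]
  have hPc2 : Pc * Pc = Pc := by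
    ext a b; fin_cases a <;> fin_cases b <;>
      simp [Matrix.mul_apply, Fin.sum_univ_two, hPc] <;> norm_num
  have hSMS : Sᵀ * Matrix.diagonal L * S =
      Matrix.of ![![L i, 0], ![0, L j]] := by
    ext a b
    rw [Matrix.mul_assoc]
    fin_cases a <;> fin_cases b <;>
      simp [Matrix.mul_apply, Matrix.diagonal_mul, hS, ite_mul, mul_ite,
        Finset.sum_ite_eq', hij, hij.symm]
  have hc : L i + L j ≠ 0 := by have := hL i; have := hL j; linarith
  have hmid : Pcᵀ * Sᵀ * Matrix.diagonal L * S * Pc = ((L i + L j)/2) • Pc := by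
    have : Pcᵀ * Sᵀ * Matrix.diagonal L * S * Pc
        = Pcᵀ * (Sᵀ * Matrix.diagonal L * S) * Pc := by
      simp [Matrix.mul_assoc]
    rw [this, hSMS, hPcT]
    ext a b
    fin_cases a <;> fin_cases b <;>
      simp [Matrix.mul_apply, Fin.sum_univ_two, hPc] <;> ring
  have hmpmid : mpinv (Pcᵀ * Sᵀ * Matrix.diagonal L * S * Pc)
      = ((L i + L j)/2)⁻¹ • Pc := by
    rw [hmid]
    exact mpinv_smul_proj Pc hPcT hPc2 _ (by have := hL i; have := hL j; positivity)
  have hSPS : S * Pc * Sᵀ = (1/2 : ℝ) •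
      Matrix.vecMulVec (Pi.single i 1 - Pi.single j 1) (Pi.single i 1 - Pi.single j 1) := by
    ext k l
    simp only [Matrix.smul_apply, Matrix.mul_apply, Fin.sum_univ_two, hPc, hS,
      Matrix.of_apply, Matrix.transpose_apply, Matrix.vecMulVec_apply, Pi.sub_apply,
      Pi.single_apply, smul_eq_mul]
    norm_num
    by_cases hki : k = i <;> by_cases hkj : k = j <;> by_cases hli : l = i <;>
      by_cases hlj : l = j <;> simp [hki, hkj, hli, hlj, hij, hij.symm] <;> ring
  rw [Zmat, hP, hmpmid, hPcT]
  rw [Matrix.mul_smul, Matrix.smul_mul, Matrix.smul_mul]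
  rw [Matrix.mul_assoc S Pc Pc, hPc2, Matrix.mul_assoc S Pc Pc, hPc2, hSPS, smul_smul]
  congr 1
  field_simp


lemma sumE {n : ℕ} (k l : Fin n) :
    ∑ q ∈ Finset.univ.filter (fun q : Fin n × Fin n => q.1 < q.2),
      (((if k = q.1 then (1:ℝ) else 0) - if k = q.2 then 1 else 0) *
       ((if l = q.1 then (1:ℝ) else 0) - if l = q.2 then 1 else 0))
    = if k = l then (n:ℝ) - 1 else -1 := by
  set f : Fin n × Fin n → ℝ := fun q =>
    (((if k = q.1 then (1:ℝ) else 0) - if k = q.2 then 1 else 0) *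
     ((if l = q.1 then (1:ℝ) else 0) - if l = q.2 then 1 else 0)) with hf
  have hsym : ∀ q : Fin n × Fin n, f (q.2, q.1) = f q := by
    intro q; simp only [hf]; ring
  have e3 : ∑ b, (if k = b then (1:ℝ) else 0) * (if l = b then 1 else 0)
      = if k = l then 1 else 0 := by
    by_cases hkl : k = l
    · subst hkl; simp [ite_mul]
    · rw [if_neg hkl]
      apply Finset.sum_eq_zero
      intro b _
      by_cases h1 : k = b
      · have : ¬ l = b := fun h => hkl (h1.trans h.symm)
        simp [h1, this]
      · simp [h1]
  have huniv : ∑ q : Fin n × Fin n, f q = 2 * ((if k = l then (n:ℝ) else 0) - 1) := by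
    rw [Fintype.sum_prod_type]
    have inner : ∀ a : Fin n, ∑ b, f (a, b) =
        (n : ℝ) * ((if k = a then (1:ℝ) else 0) * (if l = a then 1 else 0))
          - (if k = a then 1 else 0) - (if l = a then 1 else 0)
          + (if k = l then 1 else 0) := by
      intro a
      have expand : ∀ b : Fin n, f (a, b) =
          (if k = a then (1:ℝ) else 0) * (if l = a then 1 else 0)
          - (if k = a then 1 else 0) * (if l = b then 1 else 0)
          - (if k = b then 1 else 0) * (if l = a then 1 else 0)
          + (if k = b then 1 else 0) * (if l = b then 1 else 0) := by
        intro b; simp only [hf]; ring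
      rw [Finset.sum_congr rfl (fun b _ => expand b)]
      rw [Finset.sum_add_distrib, Finset.sum_sub_distrib, Finset.sum_sub_distrib,
        Finset.sum_const, e3, ← Finset.mul_sum, ← Finset.sum_mul]
      simp [Finset.card_univ, nsmul_eq_mul]
    rw [Finset.sum_congr rfl (fun a _ => inner a)]
    rw [Finset.sum_add_distrib, Finset.sum_sub_distrib, Finset.sum_sub_distrib,
      Finset.sum_const, ← Finset.mul_sum, e3]
    simp [Finset.card_univ, nsmul_eq_mul]
    split_ifs <;> ring
  have hdiag : ∑ q ∈ Finset.univ.filter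
      (fun q : Fin n × Fin n => ¬ q.1 < q.2 ∧ ¬ q.2 < q.1), f q = 0 := by
    apply Finset.sum_eq_zero
    intro q hq
    simp only [Finset.mem_filter, Finset.mem_univ, true_and] at hq
    have hqq : q.1 = q.2 := le_antisymm (not_lt.1 hq.2) (not_lt.1 hq.1)
    simp [hf, hqq]
  have hgt : ∑ q ∈ Finset.univ.filter (fun q : Fin n × Fin n => q.2 < q.1), f q
      = ∑ q ∈ Finset.univ.filter (fun q : Fin n × Fin n => q.1 < q.2), f q := by
    apply Finset.sum_equiv (Equiv.prodComm (Fin n) (Fin n))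
    · intro q; simp
    · intro q _; exact (hsym q).symm
  have h1 := Finset.sum_filter_add_sum_filter_not Finset.univ
      (fun q : Fin n × Fin n => q.1 < q.2) f
  have h2 := Finset.sum_filter_add_sum_filter_not
      (Finset.univ.filter (fun q : Fin n × Fin n => ¬ q.1 < q.2))
      (fun q : Fin n × Fin n => q.2 < q.1) f
  rw [Finset.filter_filter, Finset.filter_filter] at h2
  have hset : Finset.univ.filter (fun q : Fin n × Fin n => ¬ q.1 < q.2 ∧ q.2 < q.1)
      = Finset.univ.filter (fun q : Fin n × Fin n => q.2 < q.1) := by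
    apply Finset.filter_congr
    intro q _
    exact ⟨And.right, fun h => ⟨lt_asymm h, h⟩⟩
  rw [hset, hgt, hdiag] at h2
  rw [← h1] at huniv
  rw [← h2] at huniv
  have := huniv
  split_ifs at this ⊢ <;> linarith


/-- explicit sketch matrices for a single sum constraint:
`Z_{S_(i,j)} = (e_i−e_j)(e_i−e_j)ᵀ/(L_i+L_j)`, `Z = (n/((n−1)L))(I − eeᵀ/n)`,
`Z† = ((n−1)L/n)(I − eeᵀ/n)`, and `Z` is positive definite on `ker(A)`. -/
theorem stmt17 {n : ℕ} (hn : 2 ≤ n) (L : Fin n → ℝ) (hL : ∀ i, 0 < L i)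
    (Ltot : ℝ) (hLtot : Ltot = ∑ i, L i)
    (A : Matrix (Fin 1) (Fin n) ℝ) (hA : A = Matrix.of fun _ _ => (1 : ℝ))
    (Mm : Matrix (Fin n) (Fin n) ℝ) (hMm : Mm = Matrix.diagonal L)
    (Sij : Fin n → Fin n → Matrix (Fin n) (Fin 2) ℝ)
    (hSij : ∀ i j : Fin n, Sij i j = Matrix.of fun k l =>
      if l = (0 : Fin 2) then (if k = i then (1 : ℝ) else 0)
      else (if k = j then (1 : ℝ) else 0))
    (Zexp : Matrix (Fin n) (Fin n) ℝ)
    (hZexp : Zexp = ((n : ℝ) / (((n : ℝ) - 1) * Ltot)) •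
      ((1 : Matrix (Fin n) (Fin n) ℝ) -
        ((1 : ℝ) / (n : ℝ)) • Matrix.of (fun _ _ => (1 : ℝ)))) :
    (∀ i j : Fin n, i < j →
        Zmat A Mm (Sij i j) = (1 / (L i + L j)) •
          Matrix.vecMulVec (Pi.single i 1 - Pi.single j 1)
            (Pi.single i 1 - Pi.single j 1)) ∧
      (∑ q ∈ Finset.univ.filter (fun q : Fin n × Fin n => q.1 < q.2),
          ((L q.1 + L q.2) / (((n : ℝ) - 1) * Ltot)) • Zmat A Mm (Sij q.1 q.2)) = Zexp ∧
      mpinv Zexp = ((((n : ℝ) - 1) * Ltot) / (n : ℝ)) •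
        ((1 : Matrix (Fin n) (Fin n) ℝ) -
          ((1 : ℝ) / (n : ℝ)) • Matrix.of (fun _ _ => (1 : ℝ))) ∧
      ∀ u : Fin n → ℝ, (∑ i, u i) = 0 → u ≠ 0 → 0 < u ⬝ᵥ Zexp.mulVec u := by
  have hnR : (2:ℝ) ≤ (n:ℝ) := by exact_mod_cast hn
  have hn0 : (0:ℝ) < n := by linarith
  have hn1 : (0:ℝ) < (n:ℝ) - 1 := by linarith
  have hLt : 0 < Ltot := by
    rw [hLtot]
    exact Finset.sum_pos (fun i _ => hL i) ⟨⟨0, by omega⟩, Finset.mem_univ _⟩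
  have hne : (n:ℝ) ≠ 0 := ne_of_gt hn0
  have hn1e : (n:ℝ) - 1 ≠ 0 := ne_of_gt hn1
  have hLte : Ltot ≠ 0 := ne_of_gt hLt
  have p1 : ∀ i j : Fin n, i ≠ j → Zmat A Mm (Sij i j) = (1 / (L i + L j)) •
      Matrix.vecMulVec (Pi.single i 1 - Pi.single j 1) (Pi.single i 1 - Pi.single j 1) := by
    intro i j hij
    rw [hA, hMm]
    exact part1 L hL i j hij _ (hSij i j)
  refine ⟨fun i j hij => p1 i j (ne_of_lt hij), ?_, ?_, ?_⟩
  · rw [hZexp]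
    have step : ∀ q ∈ Finset.univ.filter (fun q : Fin n × Fin n => q.1 < q.2),
        ((L q.1 + L q.2) / (((n:ℝ) - 1) * Ltot)) • Zmat A Mm (Sij q.1 q.2)
        = (1 / (((n:ℝ) - 1) * Ltot)) •
          Matrix.vecMulVec (Pi.single q.1 1 - Pi.single q.2 1)
            (Pi.single q.1 1 - Pi.single q.2 1) := by
      intro q hq
      simp only [Finset.mem_filter, Finset.mem_univ, true_and] at hq
      have hLq : L q.1 + L q.2 ≠ 0 := by have := hL q.1; have := hL q.2; linarith
      rw [p1 q.1 q.2 (ne_of_lt hq), smul_smul]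
      congr 1
      field_simp
    rw [Finset.sum_congr rfl step]
    ext k l
    rw [Matrix.sum_apply]
    simp only [Matrix.smul_apply, Matrix.vecMulVec_apply, Pi.sub_apply, Pi.single_apply,
      smul_eq_mul]
    rw [← Finset.mul_sum, sumE k l]
    simp only [Matrix.smul_apply, Matrix.sub_apply, Matrix.one_apply, Matrix.of_apply,
      smul_eq_mul, mul_one]
    split_ifs <;> field_simp <;> ring
  · rw [hZexp]
    set Q : Matrix (Fin n) (Fin n) ℝ :=
      (1 : Matrix (Fin n) (Fin n) ℝ) - ((1:ℝ)/(n:ℝ)) • Matrix.of (fun _ _ => (1:ℝ)) with hQ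
    have hQT : Qᵀ = Q := by
      ext a b
      by_cases h : a = b
      · subst h; simp [hQ]
      · simp [hQ, Matrix.one_apply, h, Ne.symm h]
    have key : ∀ a b : Fin n,
        ∑ m, ((if a = m then (1:ℝ) else 0) * (if m = b then 1 else 0))
          = if a = b then 1 else 0 := by
      intro a b
      by_cases hab : a = b
      · subst hab; simp [ite_mul]
      · rw [if_neg hab]
        apply Finset.sum_eq_zero
        intro m _
        by_cases h1 : a = m
        · have : ¬ m = b := fun h => hab (h1.trans h)
          simp [h1, this]
        · simp [h1]
    have hQ2 : Q * Q = Q := by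
      ext a b
      rw [Matrix.mul_apply]
      simp only [hQ, Matrix.sub_apply, Matrix.one_apply, Matrix.smul_apply, Matrix.of_apply,
        smul_eq_mul, mul_one]
      have expand : ∀ m : Fin n,
          ((if a = m then (1:ℝ) else 0) - 1/n) * ((if m = b then 1 else 0) - 1/n)
          = (if a = m then (1:ℝ) else 0) * (if m = b then 1 else 0)
            - 1/n * (if a = m then 1 else 0) - 1/n * (if m = b then 1 else 0)
            + 1/n * (1/n) := fun m => by ring
      rw [Finset.sum_congr rfl (fun m _ => expand m)]
      rw [Finset.sum_add_distrib, Finset.sum_sub_distrib, Finset.sum_sub_distrib, key a b,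
        ← Finset.mul_sum, ← Finset.mul_sum, Finset.sum_const, Finset.card_univ, Fintype.card_fin,
        Finset.sum_ite_eq Finset.univ a (fun _ => (1:ℝ)),
        Finset.sum_ite_eq' Finset.univ b (fun _ => (1:ℝ))]
      simp only [Finset.mem_univ, if_true, nsmul_eq_mul]
      split_ifs <;> field_simp <;> ring
    have hcne : (n:ℝ) / (((n:ℝ)-1) * Ltot) ≠ 0 :=
      ne_of_gt (div_pos hn0 (mul_pos hn1 hLt))
    rw [mpinv_smul_proj Q hQT hQ2 _ hcne, inv_div]
  · intro u hsum0 hu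
    have hmv : Zexp.mulVec u = fun a => ((n:ℝ) / (((n:ℝ)-1) * Ltot)) * u a := by
      funext a
      rw [hZexp]
      simp only [Matrix.mulVec, dotProduct, Matrix.smul_apply, Matrix.sub_apply,
        Matrix.one_apply, Matrix.of_apply, smul_eq_mul, mul_one]
      simp only [mul_assoc]
      rw [← Finset.mul_sum]
      congr 1
      have expand : ∀ m : Fin n, ((if a = m then (1:ℝ) else 0) - 1/n) * u m
          = (if a = m then (1:ℝ) else 0) * u m - 1/n * u m := fun m => by ring
      rw [Finset.sum_congr rfl (fun m _ => expand m), Finset.sum_sub_distrib,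
        ← Finset.mul_sum, hsum0, mul_zero, sub_zero]
      simp [ite_mul, Finset.sum_ite_eq]
    rw [hmv]
    have hdp : u ⬝ᵥ (fun a => ((n:ℝ) / (((n:ℝ)-1) * Ltot)) * u a)
        = ((n:ℝ) / (((n:ℝ)-1) * Ltot)) * ∑ a, u a * u a := by
      simp only [dotProduct]
      rw [Finset.mul_sum]
      exact Finset.sum_congr rfl fun a _ => by ring
    rw [hdp]
    apply mul_pos (div_pos hn0 (mul_pos hn1 hLt))
    obtain ⟨a, ha⟩ := Function.ne_iff.mp hu
    exact Finset.sum_pos' (fun b _ => mul_self_nonneg _)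
      ⟨a, Finset.mem_univ a, mul_self_pos.mpr ha⟩
end

section
/- (Bound on ν_max for a single sum constraint.) In the setting where n ≥ 2, L_1, …, L_n > 0, L = Σ_i L_i, M = diag(L_1, …, L_n), A = e^T, S_{(i,j)} = [e_i e_j] with probabilities P_{(i,j)} = (L_i + L_j)/((n−1)L), Z_{S_{(i,j)}} = (1/(L_i+L_j))(e_i − e_j)(e_i − e_j)^T, and Z = (n/((n−1)L))(I_n − (1/n) e e^T), the constant ν_max = max{ (Σ_{i<j} P_{(i,j)} u^T Z_{S_{(i,j)}} Z† Z_{S_{(i,j)}} u) / (u^T Z u) : u ∈ ker(A), u ≠ 0 } satisfies ν_max ≤ max_{i<j} 2(n−1)L / (n (L_i + L_j)). -/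
open Matrix

lemma penrose_unique {k l : Type*} [Fintype k] [Fintype l] (B : Matrix k l ℝ)
    (X Y : Matrix l k ℝ)
    (h1 : B * X * B = B) (h2 : X * B * X = X) (h3 : (B * X)ᵀ = B * X) (h4 : (X * B)ᵀ = X * B)
    (g1 : B * Y * B = B) (g2 : Y * B * Y = Y) (g3 : (B * Y)ᵀ = B * Y) (g4 : (Y * B)ᵀ = Y * B) :
    X = Y := by
  have hb : B * (X * B) = B := by simpa [Matrix.mul_assoc] using h1
  have hb' : B * (Y * B) = B := by simpa [Matrix.mul_assoc] using g1
  have hXB : X * B = Y * B := by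
    have e1 : X * B = X * B * (Y * B) := by
      conv_lhs => rw [← g1]
      simp [Matrix.mul_assoc]
    have e2 : X * B * (Y * B) = (Y * (B * (X * B)))ᵀ := by
      rw [show Y * (B * (X * B)) = (Y * B) * (X * B) from by simp [Matrix.mul_assoc],
        Matrix.transpose_mul, h4, g4]
    rw [e1, e2, hb, g4]
  have hBX : B * X = B * Y := by
    have e1 : B * X = (B * Y) * (B * X) := by
      conv_lhs => rw [← g1]
      simp [Matrix.mul_assoc]
    have e2 : (B * Y) * (B * X) = ((B * (X * B)) * Y)ᵀ := by
      rw [show (B * (X * B)) * Y = (B * X) * (B * Y) from by simp [Matrix.mul_assoc],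
        Matrix.transpose_mul, h3, g3]
    rw [e1, e2, hb, g3]
  calc X = X * B * X := h2.symm
  _ = Y * B * X := by rw [hXB]
  _ = Y * (B * X) := by rw [Matrix.mul_assoc]
  _ = Y * (B * Y) := by rw [hBX]
  _ = Y * B * Y := by rw [Matrix.mul_assoc]
  _ = Y := g2

lemma pair_sum {n : ℕ} (g : Fin n → Fin n → ℝ) (hsymm : ∀ i j, g i j = g j i)
    (hdiag : ∀ i, g i i = 0) :
    2 * ∑ q ∈ Finset.univ.filter (fun q : Fin n × Fin n => q.1 < q.2), g q.1 q.2
      = ∑ i, ∑ j, g i j := by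
  have hfull : ∑ i, ∑ j, g i j = ∑ q : Fin n × Fin n, g q.1 q.2 := by
    rw [← Finset.sum_product']
    rfl
  rw [hfull, ← Finset.sum_filter_add_sum_filter_not Finset.univ (fun q : Fin n × Fin n => q.1 < q.2)]
  have h2 : ∑ q ∈ Finset.univ.filter (fun q : Fin n × Fin n => ¬ q.1 < q.2), g q.1 q.2
      = ∑ q ∈ Finset.univ.filter (fun q : Fin n × Fin n => q.1 < q.2), g q.1 q.2 := by
    rw [← Finset.sum_filter_add_sum_filter_not
      (Finset.univ.filter (fun q : Fin n × Fin n => ¬ q.1 < q.2))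
      (fun q : Fin n × Fin n => q.1 = q.2)]
    have hz : ∑ q ∈ (Finset.univ.filter (fun q : Fin n × Fin n => ¬ q.1 < q.2)).filter
        (fun q : Fin n × Fin n => q.1 = q.2), g q.1 q.2 = 0 := by
      apply Finset.sum_eq_zero
      intro q hq
      simp only [Finset.mem_filter] at hq
      rw [hq.2, hdiag]
    rw [hz, zero_add]
    apply Finset.sum_nbij' (fun q => Prod.swap q) (fun q => Prod.swap q)
    · intro q hq
      simp only [Finset.mem_filter, Finset.mem_univ, true_and, Finset.filter_filter,
        Prod.fst_swap, Prod.snd_swap] at hq ⊢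
      rcases hq with ⟨h1, h2⟩
      exact lt_of_le_of_ne (not_lt.mp h1) (Ne.symm h2)
    · intro q hq
      simp only [Finset.mem_filter, Finset.mem_univ, true_and, Finset.filter_filter,
        Prod.fst_swap, Prod.snd_swap] at hq ⊢
      constructor
      · exact not_lt.mpr hq.le
      · exact hq.ne'
    · intro q _; simp
    · intro q _; simp
    · intro q _; exact hsymm q.1 q.2
  rw [h2]; ring

lemma sq_diff_sum {n : ℕ} (u : Fin n → ℝ) (hu : ∑ i, u i = 0) :
    ∑ i, ∑ j, (u i - u j)^2 = 2 * (n : ℝ) * ∑ i, (u i)^2 := by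
  have : ∀ i : Fin n, ∑ j, (u i - u j)^2
      = (n : ℝ) * (u i)^2 - 2 * u i * (∑ j, u j) + ∑ j, (u j)^2 := by
    intro i
    rw [Finset.sum_congr rfl (fun j _ => by ring :
      ∀ j ∈ Finset.univ, (u i - u j)^2 = (u i)^2 - 2 * u i * u j + (u j)^2)]
    simp [Finset.sum_add_distrib, Finset.sum_sub_distrib, Finset.mul_sum, Finset.card_univ]
  simp only [this, hu, Finset.sum_add_distrib, Finset.sum_sub_distrib, Finset.sum_const,
    Finset.card_univ, Fintype.card_fin, nsmul_eq_mul, ← Finset.sum_mul, ← Finset.mul_sum]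
  ring

section proj
variable {n : ℕ}

noncomputable def Jm (n : ℕ) : Matrix (Fin n) (Fin n) ℝ := Matrix.of (fun _ _ => (1:ℝ))
noncomputable def Pm (n : ℕ) : Matrix (Fin n) (Fin n) ℝ := 1 - ((1:ℝ)/(n:ℝ)) • Jm n

lemma Jm_mul_Jm : Jm n * Jm n = (n : ℝ) • Jm n := by
  ext i j; simp [Jm, Matrix.mul_apply]

lemma Pm_transpose : (Pm n)ᵀ = Pm n := by
  simp [Pm, Jm, Matrix.transpose_sub, Matrix.transpose_smul]
  ext i j; simp [Matrix.transpose_apply]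

lemma Pm_mul_Pm (hn : (n:ℝ) ≠ 0) : Pm n * Pm n = Pm n := by
  simp only [Pm, Matrix.sub_mul, Matrix.mul_sub, Matrix.one_mul, Matrix.mul_one,
    Matrix.smul_mul, Matrix.mul_smul, Jm_mul_Jm, smul_smul]
  rw [show ((1:ℝ)/(n:ℝ) * (n:ℝ)) = 1 from by field_simp, one_smul, sub_self, smul_zero,
    sub_zero]

lemma mpinv_smul_Pm (c : ℝ) (hc : c ≠ 0) (hn : (n:ℝ) ≠ 0) :
    mpinv (c • Pm n) = c⁻¹ • Pm n := by
  have hPP := Pm_mul_Pm (n := n) hn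
  have hcc : c • Pm n * (c⁻¹ • Pm n) = Pm n := by
    rw [Matrix.smul_mul, Matrix.mul_smul, smul_smul, mul_inv_cancel₀ hc, one_smul, hPP]
  have hcc' : c⁻¹ • Pm n * (c • Pm n) = Pm n := by
    rw [Matrix.smul_mul, Matrix.mul_smul, smul_smul, inv_mul_cancel₀ hc, one_smul, hPP]
  apply mpinv_eq
  · rw [hcc, Matrix.mul_smul, hPP]
  · rw [hcc', Matrix.mul_smul, hPP]
  · rw [hcc, Pm_transpose]
  · rw [hcc', Pm_transpose]

lemma Pm_mulVec (v : Fin n → ℝ) (hv : ∑ i, v i = 0) : (Pm n).mulVec v = v := by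
  ext i
  simp [Pm, Matrix.sub_mulVec, Matrix.one_mulVec, Matrix.smul_mulVec, Jm,
    Matrix.mulVec, dotProduct, hv, sub_mul, Finset.sum_sub_distrib, Matrix.one_apply,
    ite_mul, ← Finset.mul_sum]
end proj

lemma vecMulVec_mulVec' {n : ℕ} (v w u : Fin n → ℝ) :
    (Matrix.vecMulVec v w).mulVec u = (w ⬝ᵥ u) • v := by
  ext k
  simp only [Matrix.mulVec, dotProduct, Matrix.vecMulVec_apply, Pi.smul_apply,
    smul_eq_mul, Finset.sum_mul]
  exact Finset.sum_congr rfl fun t _ => by ring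


/-- for the single sum constraint with pairwise coordinate sketches,
`ν_max ≤ max_{i<j} 2(n−1)L/(n(L_i + L_j))`. -/
theorem stmt18 {n : ℕ} (hn : 2 ≤ n) (L : Fin n → ℝ) (hL : ∀ i, 0 < L i)
    (Ltot : ℝ) (hLtot : Ltot = ∑ i, L i)
    (Pij : Fin n → Fin n → ℝ)
    (hPij : ∀ i j, Pij i j = (L i + L j) / (((n : ℝ) - 1) * Ltot))
    (Zs : Fin n → Fin n → Matrix (Fin n) (Fin n) ℝ)
    (hZs : ∀ i j : Fin n, Zs i j = (1 / (L i + L j)) •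
      Matrix.vecMulVec (Pi.single i 1 - Pi.single j 1) (Pi.single i 1 - Pi.single j 1))
    (Z : Matrix (Fin n) (Fin n) ℝ)
    (hZ : Z = ((n : ℝ) / (((n : ℝ) - 1) * Ltot)) •
      ((1 : Matrix (Fin n) (Fin n) ℝ) -
        ((1 : ℝ) / (n : ℝ)) • Matrix.of (fun _ _ => (1 : ℝ))))
    (ratioSet : Set ℝ)
    (hratio : ratioSet = {r : ℝ | ∃ u : Fin n → ℝ, (∑ i, u i) = 0 ∧ u ≠ 0 ∧
      r = (∑ q ∈ Finset.univ.filter (fun q : Fin n × Fin n => q.1 < q.2),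
            Pij q.1 q.2 * ((Zs q.1 q.2).mulVec u ⬝ᵥ
              (mpinv Z).mulVec ((Zs q.1 q.2).mulVec u))) / (u ⬝ᵥ Z.mulVec u)})
    (νmax : ℝ) (hν : νmax = sSup ratioSet) :
    νmax ≤ (Finset.univ.filter (fun q : Fin n × Fin n => q.1 < q.2)).sup'
        ⟨(⟨0, by omega⟩, ⟨1, by omega⟩), by
          exact Finset.mem_filter.mpr ⟨Finset.mem_univ _, by exact Fin.mk_lt_mk.mpr one_pos⟩⟩
        (fun q => 2 * ((n : ℝ) - 1) * Ltot / ((n : ℝ) * (L q.1 + L q.2))) := by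
  have hnR : (0:ℝ) < (n:ℝ) := by positivity
  have hn1 : (0:ℝ) < (n:ℝ) - 1 := by
    have : (2:ℝ) ≤ (n:ℝ) := by exact_mod_cast hn
    linarith
  have hne : Nonempty (Fin n) := ⟨⟨0, by omega⟩⟩
  have hLt : 0 < Ltot := by
    rw [hLtot]
    apply Finset.sum_pos (fun i _ => hL i)
    exact Finset.univ_nonempty (α := Fin n)
  set c : ℝ := (n:ℝ) / (((n:ℝ) - 1) * Ltot) with hcdef
  have hc : 0 < c := by positivity
  have hZP : Z = c • Pm n := by rw [hZ]; rfl
  have hmp : mpinv Z = c⁻¹ • Pm n := by rw [hZP]; exact mpinv_smul_Pm c hc.ne' hnR.ne'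
  set Bd : ℝ := (Finset.univ.filter (fun q : Fin n × Fin n => q.1 < q.2)).sup'
        ⟨(⟨0, by omega⟩, ⟨1, by omega⟩), by
          exact Finset.mem_filter.mpr ⟨Finset.mem_univ _, by exact Fin.mk_lt_mk.mpr one_pos⟩⟩
        (fun q => 2 * ((n : ℝ) - 1) * Ltot / ((n : ℝ) * (L q.1 + L q.2))) with hBd
  have hBd0 : 0 ≤ Bd := by
    have hmem : ((⟨0, by omega⟩ : Fin n), (⟨1, by omega⟩ : Fin n)) ∈
        Finset.univ.filter (fun q : Fin n × Fin n => q.1 < q.2) :=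
      Finset.mem_filter.mpr ⟨Finset.mem_univ _, by exact Fin.mk_lt_mk.mpr one_pos⟩
    have hle := Finset.le_sup'
      (fun q : Fin n × Fin n => 2 * ((n : ℝ) - 1) * Ltot / ((n : ℝ) * (L q.1 + L q.2))) hmem
    have hpos : 0 ≤ 2 * ((n : ℝ) - 1) * Ltot /
        ((n : ℝ) * (L (⟨0, by omega⟩ : Fin n) + L (⟨1, by omega⟩ : Fin n))) := by
      have h1 := hL (⟨0, by omega⟩ : Fin n)
      have h2 := hL (⟨1, by omega⟩ : Fin n)
      positivity
    exact le_trans hpos hle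
  rw [hν]
  apply Real.sSup_le _ hBd0
  rintro r hr
  rw [hratio] at hr
  obtain ⟨u, hu0, hune, hr⟩ := hr
  set su : ℝ := ∑ i, (u i)^2 with hsu_def
  have hsu : 0 < su := by
    obtain ⟨i, hi⟩ := Function.ne_iff.mp hune
    exact Finset.sum_pos' (fun j _ => sq_nonneg _)
      ⟨i, Finset.mem_univ i, pow_pos (abs_pos.mpr hi) 2 |>.trans_eq (by rw [sq_abs])⟩
  have hden : u ⬝ᵥ Z.mulVec u = c * su := by
    rw [hZP, Matrix.smul_mulVec, Pm_mulVec u hu0, dotProduct_smul, smul_eq_mul]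
    congr 1
    exact Finset.sum_congr rfl fun i _ => (sq (u i)).symm
  -- per-pair term value
  have hterm : ∀ q : Fin n × Fin n, q.1 < q.2 →
      Pij q.1 q.2 * ((Zs q.1 q.2).mulVec u ⬝ᵥ (mpinv Z).mulVec ((Zs q.1 q.2).mulVec u))
        = 2 * (u q.1 - u q.2)^2 / ((n:ℝ) * (L q.1 + L q.2)) := by
    rintro ⟨i, j⟩ hij
    have hijne : i ≠ j := ne_of_lt hij
    have hLij : 0 < L i + L j := by have := hL i; have := hL j; linarith
    set w : Fin n → ℝ := Pi.single i 1 - Pi.single j 1 with hw_def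
    have hw : ∑ k, w k = 0 := by
      simp [hw_def, Finset.sum_sub_distrib, Pi.single_apply]
    have hwu : w ⬝ᵥ u = u i - u j := by
      simp [hw_def, dotProduct, Pi.single_apply, sub_mul, Finset.sum_sub_distrib,
        ite_mul]
    have hww : w ⬝ᵥ w = 2 := by
      simp [hw_def, dotProduct, Pi.single_apply, sub_mul, mul_sub,
        Finset.sum_sub_distrib, ite_mul, mul_ite, Finset.sum_ite_eq, Finset.sum_ite_eq',
        hijne, Ne.symm hijne]
      norm_num
    set s : ℝ := (u i - u j) / (L i + L j) with hs_def
    have hZsu : (Zs i j).mulVec u = s • w := by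
      rw [hZs, Matrix.smul_mulVec, vecMulVec_mulVec', hwu, smul_smul, hs_def]
      congr 1
      field_simp
    have hmpv : (mpinv Z).mulVec (s • w) = (c⁻¹ * s) • w := by
      rw [hmp, Matrix.smul_mulVec, Matrix.mulVec_smul, Pm_mulVec w hw, smul_smul]
    rw [hZsu, hmpv, smul_dotProduct, dotProduct_smul, hww, hPij]
    simp only [smul_eq_mul]
    rw [hs_def, hcdef]
    field_simp
  have hnum_sum : ∑ q ∈ Finset.univ.filter (fun q : Fin n × Fin n => q.1 < q.2),
      (u q.1 - u q.2)^2 = (n:ℝ) * su := by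
    have h1 := pair_sum (fun i j => (u i - u j)^2) (fun i j => by ring) (fun i => by ring)
    have h2 := sq_diff_sum u hu0
    rw [hsu_def]; linarith
  have hnum_le : (∑ q ∈ Finset.univ.filter (fun q : Fin n × Fin n => q.1 < q.2),
      Pij q.1 q.2 * ((Zs q.1 q.2).mulVec u ⬝ᵥ (mpinv Z).mulVec ((Zs q.1 q.2).mulVec u)))
        ≤ Bd * (c * su) := by
    calc (∑ q ∈ Finset.univ.filter (fun q : Fin n × Fin n => q.1 < q.2),
        Pij q.1 q.2 * ((Zs q.1 q.2).mulVec u ⬝ᵥ (mpinv Z).mulVec ((Zs q.1 q.2).mulVec u)))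
        ≤ ∑ q ∈ Finset.univ.filter (fun q : Fin n × Fin n => q.1 < q.2),
            Bd * ((u q.1 - u q.2)^2 / (((n:ℝ) - 1) * Ltot)) := by
          apply Finset.sum_le_sum
          intro q hq
          have hq' : q.1 < q.2 := (Finset.mem_filter.mp hq).2
          rw [hterm q hq']
          have hBq : 2 * ((n : ℝ) - 1) * Ltot / ((n : ℝ) * (L q.1 + L q.2)) ≤ Bd :=
            Finset.le_sup'
              (fun q : Fin n × Fin n => 2 * ((n : ℝ) - 1) * Ltot / ((n : ℝ) * (L q.1 + L q.2)))
              hq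
          have hLq : 0 < L q.1 + L q.2 := by have := hL q.1; have := hL q.2; linarith
          have key : 2 * (u q.1 - u q.2)^2 / ((n:ℝ) * (L q.1 + L q.2))
              = (2 * ((n : ℝ) - 1) * Ltot / ((n : ℝ) * (L q.1 + L q.2)))
                * ((u q.1 - u q.2)^2 / (((n:ℝ) - 1) * Ltot)) := by
            field_simp
          rw [key]
          apply mul_le_mul_of_nonneg_right hBq
          positivity
      _ = Bd * (c * su) := by
          rw [← Finset.mul_sum, ← Finset.sum_div, hnum_sum, hcdef]
          field_simp
  rw [hr, hden]
  rw [div_le_iff₀ (by positivity)]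
  exact hnum_le
end
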